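/- Let α, β, γ be permutations of Fin n with γ ∘ α = β ∘ γ (so α and β are conjugate via γ), let τ₀ = id be the identity permutation, and let aMat, bMat : Fin n → Fin n → ℝ be matrices of structural constants satisfying aMat i (α i) = bMat (γ i) (β (γ i)) and aMat i i = bMat (γ i) (γ i) for all i : Fin n. Then the linear equivalence of Fin n → ℝ sending the standard basis vector e_i to e_{γ i} is an isomorphism of non-unital non-associative ℝ-algebras from E^n_{α,τ₀}(aMat) onto E^n_{β,τ₀}(bMat); in particular these two evolution algebras are isomorphic. -/

import Mathlib

/-- The product of the evolution algebra `E_{π,τ}(a)` on a finite type `ι`. -/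
noncomputable def evolMul {ι : Type*} [Fintype ι] [DecidableEq ι]
    (π τ : Equiv.Perm ι) (a : ι → ι → ℝ) (x y : ι → ℝ) : ι → ℝ :=
  fun j => ∑ i, x i * y i *
    ((if π i = j then a i (π i) else 0) + (if τ i = j then a i (τ i) else 0))

/-- if `α` and `β` are conjugate via `γ` (`γ ∘ α = β ∘ γ`), `τ₀ = id`, and
`aMat i (α i) = bMat (γ i) (β (γ i))`, `aMat i i = bMat (γ i) (γ i)` for all `i`, then
the linear equivalence sending `e_i` to `e_{γ i}` is an isomorphism from
`E^n_{α,τ₀}(aMat)` onto `E^n_{β,τ₀}(bMat)`. -/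
theorem stmt_18 (n : ℕ) (α β γ : Equiv.Perm (Fin n))
    (hconj : ∀ i : Fin n, γ (α i) = β (γ i))
    (aMat bMat : Fin n → Fin n → ℝ)
    (hab1 : ∀ i : Fin n, aMat i (α i) = bMat (γ i) (β (γ i)))
    (hab2 : ∀ i : Fin n, aMat i i = bMat (γ i) (γ i)) :
    ∃ e : (Fin n → ℝ) ≃ₗ[ℝ] (Fin n → ℝ),
      (∀ i : Fin n, e (Pi.single i 1) = Pi.single (γ i) (1 : ℝ)) ∧
      (∀ x y : Fin n → ℝ, e (evolMul α 1 aMat x y) = evolMul β 1 bMat (e x) (e y)) := by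
  refine ⟨LinearEquiv.funCongrLeft ℝ ℝ (γ.symm : Fin n ≃ Fin n), ?_, ?_⟩
  · intro i
    funext j
    simp only [LinearEquiv.funCongrLeft_apply, LinearMap.funLeft_apply,
      Pi.single_apply, Equiv.eq_symm_apply, eq_comm]
  · intro x y
    funext j
    simp only [LinearEquiv.funCongrLeft_apply, LinearMap.funLeft_apply,
      evolMul, Equiv.Perm.one_apply]
    refine Eq.trans ?_ (Equiv.sum_comp γ (fun i => x (γ.symm i) * y (γ.symm i) *
      ((if β i = j then bMat i (β i) else 0) + (if i = j then bMat i i else 0))))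
    refine Finset.sum_congr rfl fun i _ => ?_
    simp only [Equiv.symm_apply_apply]
    congr 1
    congr 1
    · rw [hab1, ← hconj]
      simp [Equiv.eq_symm_apply]
    · rw [← hab2]
      simp [Equiv.eq_symm_apply]
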